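/- Let G, G₁ and F̂ be as in the convex-hull setup (F̂ the slope of the lower convex hull C of the curve t ↦ (G(t), G₁(t)), satisfying G₁(x) ≥ ∫_{[0,x]} F̂ dG for all x with equality at points of increase of F̂). Then for every distribution function F on [0,∞), ∫ log F(t) dG₁(t) ≤ ∫ F̂(t)·log F(t) dG(t), with the convention log 0 = −∞ and 0·(−∞) = 0. -/

import Mathlib

open MeasureTheory
open scoped ENNReal

/-- `nlog x = −log x` valued in `[0,∞]`, with `nlog 0 = ∞`. -/
noncomputable def nlog (x : ℝ) : ENNReal :=
  if x = 0 then ⊤ else ENNReal.ofReal (-Real.log x)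

lemma nlog_anti {x y : ℝ} (hx : 0 ≤ x) (hxy : x ≤ y) : nlog y ≤ nlog x := by
  unfold nlog
  by_cases h : x = 0
  · simp [h]
  · have hx0 : 0 < x := lt_of_le_of_ne hx (Ne.symm h)
    have hy0 : 0 < y := lt_of_lt_of_le hx0 hxy
    rw [if_neg h, if_neg hy0.ne']
    exact ENNReal.ofReal_le_ofReal (by
      have := Real.log_le_log hx0 hxy
      linarith)

lemma stieltjes_measure_Iio_zero (H : StieltjesFunction ℝ) (h : ∀ u ≤ (0:ℝ), H u = H 0) :
    H.measure (Set.Iio 0) = 0 := by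
  have hleft : Function.leftLim H 0 = H 0 := by
    refine le_antisymm (H.mono.leftLim_le le_rfl) ?_
    have h1 : H (-1) ≤ Function.leftLim H 0 := H.mono.le_leftLim (by norm_num)
    rwa [h (-1) (by norm_num)] at h1
  have hsub : Set.Iio (0:ℝ) ⊆ ⋃ n : ℕ, Set.Ioo (-(n+1):ℝ) 0 := by
    intro t ht
    obtain ⟨n, hn⟩ := exists_nat_gt (-t)
    simp only [Set.mem_iUnion, Set.mem_Ioo]
    exact ⟨n, by linarith, ht⟩
  refine measure_mono_null hsub (measure_iUnion_null fun n => ?_)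
  rw [H.measure_Ioo, hleft, h (-((n:ℝ)+1)) (neg_nonpos.mpr (by positivity)), sub_self, ENNReal.ofReal_zero]

lemma iSup_min_natCast (a : ℝ≥0∞) : ⨆ n : ℕ, min a (n : ℝ≥0∞) = a := by
  refine le_antisymm (iSup_le fun n => min_le_left _ _) ?_
  rcases eq_or_ne a ⊤ with h | h
  · subst h
    calc (⊤ : ℝ≥0∞) = ⨆ n : ℕ, (n : ℝ≥0∞) := (ENNReal.iSup_natCast).symm
      _ ≤ ⨆ n : ℕ, min ⊤ (n : ℝ≥0∞) := iSup_mono fun n => by simp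
  · obtain ⟨n, hn⟩ := ENNReal.exists_nat_gt h
    exact le_iSup_of_le n (by rw [min_eq_left hn.le])

theorem msle_log_inequality
    (G G₁ : StieltjesFunction ℝ) (Fhat F : ℝ → ℝ)
    (hFhat_mono : Monotone Fhat) (hFhat_range : ∀ t, Fhat t ∈ Set.Icc (0:ℝ) 1)
    (hF_mono : Monotone F) (hF_range : ∀ t, F t ∈ Set.Icc (0:ℝ) 1)
    (hGneg : ∀ u ≤ (0:ℝ), G u = G 0) (hG₁neg : ∀ u ≤ (0:ℝ), G₁ u = G₁ 0)
    (hhull : ∀ x, 0 ≤ x →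
      ∫⁻ u in Set.Icc (0:ℝ) x, ENNReal.ofReal (Fhat u) ∂G.measure ≤
        G₁.measure (Set.Icc 0 x))
    (hhull_eq : ∀ x, 0 ≤ x → (∀ ε > (0:ℝ), Fhat (x - ε) < Fhat (x + ε)) →
      ∫⁻ u in Set.Icc (0:ℝ) x, ENNReal.ofReal (Fhat u) ∂G.measure =
        G₁.measure (Set.Icc 0 x)) :
    ∫⁻ t, ENNReal.ofReal (Fhat t) * nlog (F t) ∂G.measure ≤
      ∫⁻ t, nlog (F t) ∂G₁.measure := by
  classical
  set μ' := G.measure.withDensity (fun t => ENNReal.ofReal (Fhat t)) with hμ'def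
  set f : ℝ → ℝ≥0∞ := fun t => nlog (F t) with hfdef
  have hf_anti : Antitone f := fun a b hab => nlog_anti (hF_range a).1 (hF_mono hab)
  have hf_meas : Measurable f := hf_anti.measurable
  have hFhat_meas : Measurable (fun t => ENNReal.ofReal (Fhat t)) :=
    hFhat_mono.measurable.ennreal_ofReal
  have hGIio : G.measure (Set.Iio 0) = 0 := stieltjes_measure_Iio_zero G hGneg
  have hμ'Iio : μ' (Set.Iio 0) = 0 := by
    rw [hμ'def, withDensity_apply _ measurableSet_Iio, Measure.restrict_eq_zero.mpr hGIio,
      lintegral_zero_measure]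
  -- Iic bound
  have hIic : ∀ x : ℝ, μ' (Set.Iic x) ≤ G₁.measure (Set.Iic x) := by
    intro x
    rcases le_or_gt 0 x with hx | hx
    · calc μ' (Set.Iic x) ≤ μ' (Set.Iio 0 ∪ Set.Icc 0 x) := by
            refine measure_mono fun t ht => ?_
            rcases lt_or_ge t 0 with h | h
            · exact Or.inl h
            · exact Or.inr ⟨h, ht⟩
        _ ≤ μ' (Set.Iio 0) + μ' (Set.Icc 0 x) := measure_union_le _ _
        _ = ∫⁻ u in Set.Icc (0:ℝ) x, ENNReal.ofReal (Fhat u) ∂G.measure := by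
            rw [hμ'Iio, zero_add, hμ'def, withDensity_apply _ measurableSet_Icc]
        _ ≤ G₁.measure (Set.Icc 0 x) := hhull x hx
        _ ≤ G₁.measure (Set.Iic x) := measure_mono fun t ht => ht.2
    · calc μ' (Set.Iic x) ≤ μ' (Set.Iio 0) :=
            measure_mono fun t ht => lt_of_le_of_lt ht hx
        _ = 0 := hμ'Iio
        _ ≤ G₁.measure (Set.Iic x) := zero_le
  -- Iio bound
  have hIio : ∀ x : ℝ, μ' (Set.Iio x) ≤ G₁.measure (Set.Iio x) := by
    intro x
    have hU : Set.Iio x = ⋃ n : ℕ, Set.Iic (x - 1/(n+1)) := by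
      ext t
      simp only [Set.mem_Iio, Set.mem_iUnion, Set.mem_Iic]
      constructor
      · intro ht
        obtain ⟨n, hn⟩ := exists_nat_one_div_lt (show (0:ℝ) < x - t by linarith)
        exact ⟨n, by push_cast at hn ⊢; linarith⟩
      · rintro ⟨n, hn⟩
        have : (0:ℝ) < 1/(n+1) := by positivity
        linarith
    have hmono : Monotone (fun n : ℕ => Set.Iic (x - 1/((n:ℝ)+1))) := by
      intro m n hmn
      refine Set.Iic_subset_Iic.mpr (sub_le_sub_left ?_ x)
      apply one_div_le_one_div_of_le (by positivity)
      exact_mod_cast add_le_add_left (Nat.cast_le.mpr hmn) 1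
    rw [hU, hmono.directed_le.measure_iUnion,
      hmono.directed_le.measure_iUnion]
    refine iSup_mono fun n => hIic _
  have huniv : μ' Set.univ ≤ G₁.measure Set.univ := by
    have hU : (Set.univ : Set ℝ) = ⋃ n : ℕ, Set.Iic (n:ℝ) := by
      ext t
      simp only [Set.mem_univ, Set.mem_iUnion, Set.mem_Iic, true_iff]
      obtain ⟨n, hn⟩ := exists_nat_ge t
      exact ⟨n, hn⟩
    have hmono : Monotone (fun n : ℕ => Set.Iic ((n:ℝ))) := fun m n hmn =>
      Set.Iic_subset_Iic.mpr (Nat.cast_le.mpr hmn)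
    rw [hU, hmono.directed_le.measure_iUnion,
      hmono.directed_le.measure_iUnion]
    exact iSup_mono fun n => hIic _
  -- key: comparison on superlevel sets of any antitone function
  have key : ∀ (g : ℝ → ℝ≥0∞), Antitone g → ∀ s : ℝ≥0∞,
      μ' {t | s < g t} ≤ G₁.measure {t | s < g t} := by
    intro g hg s
    set S := {t | s < g t} with hSdef
    have hlow : ∀ ⦃u t : ℝ⦄, u ≤ t → t ∈ S → u ∈ S := fun u t hut ht =>
      lt_of_lt_of_le ht (hg hut)
    rcases Set.eq_empty_or_nonempty S with h | hne
    · simp [h]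
    by_cases hbdd : BddAbove S
    · set x := sSup S with hxdef
      have hsub : S ⊆ Set.Iic x := fun t ht => le_csSup hbdd ht
      have hsup : Set.Iio x ⊆ S := by
        intro t ht
        obtain ⟨u, hu, htu⟩ := exists_lt_of_lt_csSup hne ht
        exact hlow htu.le hu
      by_cases hx : x ∈ S
      · have hS : S = Set.Iic x := by
          refine Set.Subset.antisymm hsub fun t ht => ?_
          rcases lt_or_eq_of_le (Set.mem_Iic.mp ht) with h | h
          · exact hsup h
          · exact h ▸ hx
        rw [hS]; exact hIic x
      · have hS : S = Set.Iio x := by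
          refine Set.Subset.antisymm (fun t ht => ?_) hsup
          exact lt_of_le_of_ne (Set.mem_Iic.mp (hsub ht)) (fun h => hx (h ▸ ht))
        rw [hS]; exact hIio x
    · have hS : S = Set.univ := by
        refine Set.eq_univ_of_forall fun t => ?_
        obtain ⟨u, hu, htu⟩ := not_bddAbove_iff.mp hbdd t
        exact hlow htu.le hu
      rw [hS]; exact huniv
  -- truncated bound
  have hbound : ∀ n : ℕ, ∫⁻ t, min (f t) n ∂μ' ≤ ∫⁻ t, f t ∂G₁.measure := by
    intro n
    set g : ℝ → ℝ := fun t => (min (f t) (n:ℝ≥0∞)).toReal with hgdef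
    have hmin_ne : ∀ t, min (f t) (n:ℝ≥0∞) ≠ ⊤ := fun t =>
      ne_top_of_le_ne_top (ENNReal.natCast_ne_top n) (min_le_right _ _)
    have hofReal : ∀ t, ENNReal.ofReal (g t) = min (f t) n := fun t =>
      ENNReal.ofReal_toReal (hmin_ne t)
    have hg_mble : Measurable g := (hf_meas.min measurable_const).ennreal_toReal
    have hmin_anti : Antitone (fun t => min (f t) (n:ℝ≥0∞)) := fun a b hab =>
      min_le_min (hf_anti hab) le_rfl
    have hset : ∀ s : ℝ, 0 ≤ s →
        {a : ℝ | s < g a} = {a : ℝ | ENNReal.ofReal s < min (f a) (n:ℝ≥0∞)} := by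
      intro s hs
      ext a
      simp only [Set.mem_setOf_eq, hgdef]
      exact (ENNReal.ofReal_lt_iff_lt_toReal hs (hmin_ne a)).symm
    calc ∫⁻ t, min (f t) (n:ℝ≥0∞) ∂μ'
        = ∫⁻ t, ENNReal.ofReal (g t) ∂μ' := lintegral_congr fun t => (hofReal t).symm
      _ = ∫⁻ s in Set.Ioi (0:ℝ), μ' {a | s < g a} :=
          lintegral_eq_lintegral_meas_lt μ'
            (Filter.Eventually.of_forall fun t => ENNReal.toReal_nonneg)
            hg_mble.aemeasurable
      _ ≤ ∫⁻ s in Set.Ioi (0:ℝ), G₁.measure {a | s < g a} := by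
          refine lintegral_mono_ae ?_
          filter_upwards [ae_restrict_mem measurableSet_Ioi] with s hs
          rw [hset s hs.le]
          exact key _ hmin_anti _
      _ = ∫⁻ t, ENNReal.ofReal (g t) ∂G₁.measure :=
          (lintegral_eq_lintegral_meas_lt G₁.measure
            (Filter.Eventually.of_forall fun t => ENNReal.toReal_nonneg)
            hg_mble.aemeasurable).symm
      _ = ∫⁻ t, min (f t) (n:ℝ≥0∞) ∂G₁.measure := lintegral_congr fun t => hofReal t
      _ ≤ ∫⁻ t, f t ∂G₁.measure := lintegral_mono fun t => min_le_left _ _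
  -- combine
  have hLHS : ∫⁻ t, ENNReal.ofReal (Fhat t) * nlog (F t) ∂G.measure = ∫⁻ t, f t ∂μ' := by
    rw [hμ'def, lintegral_withDensity_eq_lintegral_mul G.measure hFhat_meas hf_meas]
    rfl
  rw [hLHS]
  have hmono_seq : Monotone (fun n : ℕ => fun t => min (f t) (n:ℝ≥0∞)) := by
    intro m n hmn t
    exact min_le_min le_rfl (by exact_mod_cast Nat.cast_le.mpr hmn)
  have hconv : ∫⁻ t, f t ∂μ' = ⨆ n : ℕ, ∫⁻ t, min (f t) (n:ℝ≥0∞) ∂μ' := by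
    rw [← lintegral_iSup (fun n => hf_meas.min measurable_const) hmono_seq]
    exact lintegral_congr fun t => (iSup_min_natCast (f t)).symm
  rw [hconv]
  exact iSup_le hbound
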